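/- Let 𝔤 = 𝔨₁₇^{-1/2} be the six-dimensional real Lie algebra with basis f₁,…,f₆ and nonzero brackets [f₆,f₁] = f₁, [f₆,f₂] = -½f₂, [f₆,f₃] = -½f₃, and let J be the complex structure Jf₁ = f₆, Jf₂ = f₃, Jf₃ = -f₂, Jf₄ = f₅, Jf₅ = -f₄, Jf₆ = -f₁. Let g be the symmetric bilinear form with g(fᵢ,fᵢ) = 1 for all i, g(f₂,f₄) = g(f₄,f₂) = ½, g(f₃,f₅) = g(f₅,f₃) = ½, and all other entries on basis vectors zero. Then g is positive definite and J-Hermitian (g(JX,JY) = g(X,Y)), but the Hermitian structure (J,g) is not SKT, i.e. d(dᶜω) ≠ 0 for ω = g(J·,·). Hence on a six-dimensional almost abelian Lie algebra the SKT condition can hold for some J-Hermitian metrics and fail for others with the same complex structure J. -/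

import Mathlib

noncomputable section

/-- The underlying vector space of a six-dimensional real Lie algebra. -/
abbrev V6 : Type := Fin 6 → ℝ

/-- The Lie bracket of the almost abelian Lie algebra determined by the matrix `A` of
`ad_{f₆}` (column `j` of `A` lists the coordinates of `[f₆, f_{j+1}]`; the ideal
`span{f₁,…,f₅}` is abelian). -/
def braa (A : Matrix (Fin 6) (Fin 6) ℝ) : V6 →ₗ[ℝ] V6 →ₗ[ℝ] V6 :=
  LinearMap.mk₂ ℝ (fun x y => x 5 • A.mulVec y - y 5 • A.mulVec x)
    (by intro x x' y; simp [Matrix.mulVec_add, Pi.add_apply, add_smul, smul_add]; module)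
    (by intro c x y; simp [Matrix.mulVec_smul, Pi.smul_apply, smul_eq_mul, mul_smul]; module)
    (by intro x y y'; simp [Matrix.mulVec_add, smul_add, add_smul]; module)
    (by intro c x y; simp [Matrix.mulVec_smul, Pi.smul_apply, smul_eq_mul, mul_smul]; module)

/-- The bilinear form on `V6` determined by a matrix `G`. -/
def gOf (G : Matrix (Fin 6) (Fin 6) ℝ) : V6 →ₗ[ℝ] V6 →ₗ[ℝ] ℝ :=
  LinearMap.mk₂ ℝ (fun x y => dotProduct x (G.mulVec y))
    (by intro x x' y; simp [add_dotProduct])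
    (by intro c x y; simp [smul_dotProduct, smul_eq_mul])
    (by intro x y y'; simp [Matrix.mulVec_add, dotProduct_add])
    (by intro c x y; simp [Matrix.mulVec_smul, dotProduct_smul, smul_eq_mul])

/-- The standard inner product, making `f₁,…,f₆` orthonormal. -/
def gstd : V6 →ₗ[ℝ] V6 →ₗ[ℝ] ℝ := gOf 1

/-- The linear endomorphism of `V6` determined by a matrix. -/
def endOf (M : Matrix (Fin 6) (Fin 6) ℝ) : V6 →ₗ[ℝ] V6 := Matrix.toLin' M

/-- `br` is a Lie bracket: antisymmetric and satisfying the Jacobi identity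
(bilinearity is built into the type). -/
def IsBracket (br : V6 →ₗ[ℝ] V6 →ₗ[ℝ] V6) : Prop :=
  (∀ x y, br x y = - br y x) ∧
  (∀ x y z, br (br x y) z + br (br y z) x + br (br z x) y = 0)

/-- The Lie algebra has an abelian ideal of codimension one. -/
def IsAlmostAbelian (br : V6 →ₗ[ℝ] V6 →ₗ[ℝ] V6) : Prop :=
  ∃ h : Submodule ℝ V6, Module.finrank ℝ h = 5 ∧
    (∀ x ∈ h, ∀ y ∈ h, br x y = 0) ∧ (∀ x : V6, ∀ y ∈ h, br x y ∈ h)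

/-- Nilpotency of the Lie algebra: some length of iterated brackets
`[x₁,[x₂,…,[xₙ,y]…]]` always vanishes. -/
def IsNilpotentBr (br : V6 →ₗ[ℝ] V6 →ₗ[ℝ] V6) : Prop :=
  ∃ n : ℕ, ∀ x : Fin n → V6, ∀ y : V6, (List.ofFn x).foldr (fun a b => br a b) y = 0

/-- The Nijenhuis tensor of `J`. -/
def Nij (br : V6 →ₗ[ℝ] V6 →ₗ[ℝ] V6) (J : V6 →ₗ[ℝ] V6) (x y : V6) : V6 :=
  br (J x) (J y) - br x y - J (br (J x) y) - J (br x (J y))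

/-- A complex structure: `J ∘ J = -id` with vanishing Nijenhuis tensor. -/
def IsCpxStr (br : V6 →ₗ[ℝ] V6 →ₗ[ℝ] V6) (J : V6 →ₗ[ℝ] V6) : Prop :=
  (∀ x, J (J x) = -x) ∧ (∀ x y, Nij br J x y = 0)

/-- A Hermitian structure: a complex structure together with a positive-definite
compatible inner product. -/
def IsHermStr (br : V6 →ₗ[ℝ] V6 →ₗ[ℝ] V6) (J : V6 →ₗ[ℝ] V6)
    (g : V6 →ₗ[ℝ] V6 →ₗ[ℝ] ℝ) : Prop :=
  IsCpxStr br J ∧ (∀ x y, g x y = g y x) ∧ (∀ x, x ≠ 0 → 0 < g x x) ∧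
    (∀ x y, g (J x) (J y) = g x y)

/-- The fundamental form `ω = g(J·,·)`. -/
def fund (J : V6 →ₗ[ℝ] V6) (g : V6 →ₗ[ℝ] V6 →ₗ[ℝ] ℝ) : V6 → V6 → ℝ :=
  fun x y => g (J x) y

/-- The Chevalley–Eilenberg differential of a 2-form. -/
def d2 (br : V6 →ₗ[ℝ] V6 →ₗ[ℝ] V6) (ω : V6 → V6 → ℝ) : V6 → V6 → V6 → ℝ :=
  fun x y z => -ω (br x y) z + ω (br x z) y - ω (br y z) x

/-- The Chevalley–Eilenberg differential of a 3-form. -/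
def d3 (br : V6 →ₗ[ℝ] V6 →ₗ[ℝ] V6) (H : V6 → V6 → V6 → ℝ) : V6 → V6 → V6 → V6 → ℝ :=
  fun x y z w => -H (br x y) z w + H (br x z) y w - H (br x w) y z
    - H (br y z) x w + H (br y w) x z - H (br z w) x y

/-- The form `dᶜω`, where `dᶜω(X,Y,Z) = dω(JX,JY,JZ)` and `ω = g(J·,·)`. -/
def dC (br : V6 →ₗ[ℝ] V6 →ₗ[ℝ] V6) (J : V6 →ₗ[ℝ] V6)
    (g : V6 →ₗ[ℝ] V6 →ₗ[ℝ] ℝ) : V6 → V6 → V6 → ℝ :=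
  fun x y z => d2 br (fund J g) (J x) (J y) (J z)

/-- A Kähler structure: a Hermitian structure with closed fundamental form. -/
def IsKahlerStr (br : V6 →ₗ[ℝ] V6 →ₗ[ℝ] V6) (J : V6 →ₗ[ℝ] V6)
    (g : V6 →ₗ[ℝ] V6 →ₗ[ℝ] ℝ) : Prop :=
  IsHermStr br J g ∧ ∀ x y z, d2 br (fund J g) x y z = 0

/-- An SKT (pluriclosed) structure: a Hermitian structure with `d(dᶜω) = 0`. -/
def IsSKTStr (br : V6 →ₗ[ℝ] V6 →ₗ[ℝ] V6) (J : V6 →ₗ[ℝ] V6)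
    (g : V6 →ₗ[ℝ] V6 →ₗ[ℝ] ℝ) : Prop :=
  IsHermStr br J g ∧ ∀ x y z w, d3 br (dC br J g) x y z w = 0

/-- A generalized Kähler structure `(J₊, J₋, g)`. -/
def IsGenKahler (br : V6 →ₗ[ℝ] V6 →ₗ[ℝ] V6) (Jp Jm : V6 →ₗ[ℝ] V6)
    (g : V6 →ₗ[ℝ] V6 →ₗ[ℝ] ℝ) : Prop :=
  IsHermStr br Jp g ∧ IsHermStr br Jm g ∧
    (∀ x y z, dC br Jp g x y z + dC br Jm g x y z = 0) ∧
    (∀ x y z w, d3 br (dC br Jp g) x y z w = 0)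

/-- Unimodularity: every adjoint operator is traceless. -/
def Unimodular (br : V6 →ₗ[ℝ] V6 →ₗ[ℝ] V6) : Prop :=
  ∀ x : V6, LinearMap.trace ℝ V6 (br x) = 0

/-- Isomorphism of Lie algebra structures on `V6`. -/
def LieIso (br br' : V6 →ₗ[ℝ] V6 →ₗ[ℝ] V6) : Prop :=
  ∃ φ : V6 ≃ₗ[ℝ] V6, ∀ x y, φ (br x y) = br' (φ x) (φ y)

/-- The basis 3-form `fⁱ ∧ fʲ ∧ f^k`. -/
def tri (i j k : Fin 6) : V6 → V6 → V6 → ℝ := fun x y z =>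
  Matrix.det !![x i, x j, x k; y i, y j, y k; z i, z j, z k]

/-- The complex structure `J f₁ = f₆`, `J f₂ = f₃`, `J f₃ = -f₂`, `J f₄ = f₅`,
`J f₅ = -f₄`, `J f₆ = -f₁`. -/
def JP : V6 →ₗ[ℝ] V6 :=
  endOf !![0,0,0,0,0,-1; 0,0,-1,0,0,0; 0,1,0,0,0,0; 0,0,0,0,-1,0; 0,0,0,1,0,0; 1,0,0,0,0,0]

/-- The Lie algebra `𝔨₁₇^p`. -/
def k17 (p : ℝ) : V6 →ₗ[ℝ] V6 →ₗ[ℝ] V6 :=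
  braa !![1,0,0,0,0,0; 0,p,0,0,0,0; 0,0,p,0,0,0; 0,0,0,0,0,0; 0,0,0,0,0,0; 0,0,0,0,0,0]

/-- The Lie algebra `𝔨₁₇^{-1/2}`, with brackets `[f₆,f₁] = f₁`, `[f₆,f₂] = -½f₂`,
`[f₆,f₃] = -½f₃`. -/
def br17 : V6 →ₗ[ℝ] V6 →ₗ[ℝ] V6 := k17 (-1/2)

/-- The non-standard `J`-Hermitian metric on `𝔨₁₇^{-1/2}`. -/
def g6 : V6 →ₗ[ℝ] V6 →ₗ[ℝ] ℝ :=
  gOf !![1,0,0,0,0,0; 0,1,0,1/2,0,0; 0,0,1,0,1/2,0; 0,1/2,0,1,0,0; 0,0,1/2,0,1,0; 0,0,0,0,0,1]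


section Aux

@[simp] lemma cv2' {α : Type*} {n : ℕ} (a : α) (s : Fin (n+2) → α) :
    Matrix.vecCons a s 2 = s 1 := rfl
@[simp] lemma cv3' {α : Type*} {n : ℕ} (a : α) (s : Fin (n+3) → α) :
    Matrix.vecCons a s 3 = s 2 := rfl
@[simp] lemma cv4' {α : Type*} {n : ℕ} (a : α) (s : Fin (n+4) → α) :
    Matrix.vecCons a s 4 = s 3 := rfl
@[simp] lemma cv5' {α : Type*} {n : ℕ} (a : α) (s : Fin (n+5) → α) :
    Matrix.vecCons a s 5 = s 4 := rfl

lemma g6_apply (x y : V6) : g6 x y =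
    x 0 * y 0 + x 1 * (y 1 + y 3 / 2) + x 2 * (y 2 + y 4 / 2)
    + x 3 * (y 1 / 2 + y 3) + x 4 * (y 2 / 2 + y 4) + x 5 * y 5 := by
  simp [g6, gOf, dotProduct, Matrix.mulVec, Fin.sum_univ_six, Matrix.vecHead, Matrix.vecTail]
  ring

lemma JP_apply (x : V6) : JP x = ![-(x 5), -(x 2), x 1, -(x 4), x 3, x 0] := by
  funext i
  fin_cases i <;>
    simp [JP, endOf, Matrix.toLin'_apply, Matrix.mulVec, dotProduct, Fin.sum_univ_six]

end Aux

set_option maxHeartbeats 2000000 in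
/-- On `𝔨₁₇^{-1/2}` with the complex structure `J` of `stmt_5`, the metric `g6` is
positive definite and `J`-Hermitian but the Hermitian structure `(J, g6)` is not SKT.
Hence the SKT condition depends on the choice of Hermitian metric for a fixed `J`. -/
theorem stmt_6 :
    (∀ x y, g6 x y = g6 y x) ∧
    (∀ x : V6, x ≠ 0 → 0 < g6 x x) ∧
    (∀ x y, g6 (JP x) (JP y) = g6 x y) ∧
    ¬ (∀ x y z w, d3 br17 (dC br17 JP g6) x y z w = 0) := by
  refine ⟨?_, ?_, ?_, ?_⟩
  · intro x y
    rw [g6_apply, g6_apply]; ring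
  · intro x hx
    rw [g6_apply]
    rcases (by
      by_contra h
      push_neg at h
      exact hx (funext fun i => by fin_cases i <;> simp [h] : x = 0) :
      x 0 ≠ 0 ∨ x 1 ≠ 0 ∨ x 2 ≠ 0 ∨ x 3 ≠ 0 ∨ x 4 ≠ 0 ∨ x 5 ≠ 0) with
      h | h | h | h | h | h <;>
      nlinarith [sq_nonneg (x 0), sq_nonneg (x 5), sq_nonneg (x 1 + x 3 / 2),
        sq_nonneg (x 2 + x 4 / 2), sq_nonneg (x 3), sq_nonneg (x 4),
        sq_nonneg (x 1), sq_nonneg (x 2), sq_pos_of_ne_zero h]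
  · intro x y
    rw [g6_apply, g6_apply, JP_apply, JP_apply]
    simp
    ring
  · intro h
    have key := h ![1,0,0,0,0,0] ![0,1,0,0,0,0] ![0,0,0,0,1,0] ![0,0,0,0,0,1]
    simp only [d3, dC, d2, fund, br17, k17, braa, JP, endOf, g6, gOf,
      LinearMap.mk₂_apply, Matrix.toLin'_apply] at key
    norm_num [Matrix.mulVec, dotProduct, Fin.sum_univ_six, Pi.smul_apply,
      Pi.sub_apply, smul_eq_mul, Matrix.vecHead, Matrix.vecTail] at key
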